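/- Let s be an exponentially bounded external address. Then: (i) s is slow (i.e. (s, t_s) ∉ X) if and only if there exist x ≥ 0 and infinitely many n ≥ 0 such that 2π|s_{n+k}| ≤ F^{k−1}(x) for all k ≥ 1; (ii) there exists x > 0 with 2π|s_n| ≥ F^{n−1}(x) for infinitely many n (i.e. s has positive minimal potential) if and only if there exists x > 0 such that t_{σ^j(s)} > F^j(x) for all j ≥ 0. -/

import Mathlib

open Filter Topology ENNReal

noncomputable section

/-- The space of external addresses: integer sequences (indexed from 0, so index `k`
corresponds to the entry `s_{k+1}` of the paper) with the lexicographic order. -/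
abbrev Addr : Type := Lex (ℕ → ℤ)

/-- The shift map `σ` on external addresses. -/
def shiftA (s : Addr) : Addr := toLex (fun n => ofLex s (n + 1))

/-- The model growth function `F(t) = e^t - 1`. -/
def Fexp (t : ℝ) : ℝ := Real.exp t - 1

/-- The model map `𝓕(s,t) = (σ s, F t - 2π |s₂|)`. -/
def Fmod (p : Addr × ℝ) : Addr × ℝ :=
  (shiftA p.1, Fexp p.2 - 2 * Real.pi * |((ofLex p.1 1 : ℤ) : ℝ)|)

/-- The model set `X̄ = {(s,t) : T(𝓕ⁿ(s,t)) ≥ 0 for all n ≥ 0}`. -/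
def Xbar : Set (Addr × ℝ) := {p | ∀ n : ℕ, 0 ≤ (Fmod^[n] p).2}

/-- The model escaping set `X = {(s,t) ∈ X̄ : T(𝓕ⁿ(s,t)) → ∞}`. -/
def Xset : Set (Addr × ℝ) :=
  {p | p ∈ Xbar ∧ Tendsto (fun n : ℕ => (Fmod^[n] p).2) atTop atTop}

/-- The minimal potential `t_s ∈ [0,∞]` of an address (`∞` if `(s,t) ∉ X̄` for all `t ≥ 0`). -/
def tS (s : Addr) : ℝ≥0∞ :=
  sInf (ENNReal.ofReal '' {t : ℝ | 0 ≤ t ∧ (s, t) ∈ Xbar})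

/-- The exponential map `E_κ(z) = e^z + κ`. -/
def Eexp (κ : ℂ) (z : ℂ) : ℂ := Complex.exp z + κ

/-- The escaping set `I(E_κ)`. -/
def escapingSet (κ : ℂ) : Set ℂ :=
  {z | Tendsto (fun n : ℕ => ‖(Eexp κ)^[n] z‖) atTop atTop}

/-- The order topology induced by the lexicographic order on external addresses. -/
instance : TopologicalSpace Addr := Preorder.topology Addr
instance : OrderTopology Addr := ⟨rfl⟩

/-! ### Auxiliary development -/

namespace SlowAux

/-- Absolute entry weight. -/
def w (s : Addr) (k : ℕ) : ℝ := 2 * Real.pi * |((ofLex s k : ℤ) : ℝ)|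

lemma w_nonneg (s : Addr) (k : ℕ) : 0 ≤ w s k := by
  simp only [w]
  positivity

/-- The real orbit. -/
def orb (s : Addr) (t : ℝ) : ℕ → ℝ
  | 0 => t
  | n+1 => Fexp (orb s t n) - w s (n+1)

lemma ofLex_shiftA (s : Addr) (k : ℕ) : ofLex (shiftA s) k = ofLex s (k+1) := rfl

lemma ofLex_shiftA_iter (s : Addr) (m k : ℕ) :
    ofLex (shiftA^[m] s) k = ofLex s (k + m) := by
  induction m generalizing k with
  | zero => rfl
  | succ m ih =>
    rw [Function.iterate_succ_apply', ofLex_shiftA, ih]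
    have h : k + 1 + m = k + (m + 1) := by omega
    rw [h]

lemma Fmod_iterate (s : Addr) (t : ℝ) (n : ℕ) :
    Fmod^[n] (s, t) = (shiftA^[n] s, orb s t n) := by
  induction n with
  | zero => rfl
  | succ n ih =>
    rw [Function.iterate_succ_apply', ih]
    simp only [Fmod, orb, Function.iterate_succ_apply', w]
    congr 2
    rw [ofLex_shiftA_iter]
    ring_nf

lemma Fexp_strictMono : StrictMono Fexp := fun a b h => by
  simp only [Fexp]; have := Real.exp_lt_exp.2 h; linarith

lemma Fexp_zero : Fexp 0 = 0 := by simp [Fexp]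

lemma le_Fexp (t : ℝ) : t ≤ Fexp t := by
  have := Real.add_one_le_exp t; simp only [Fexp]; linarith

lemma Fexp_nonneg {t : ℝ} (h : 0 ≤ t) : 0 ≤ Fexp t := le_trans h (le_Fexp t)

lemma Fexp_iter_nonneg {t : ℝ} (h : 0 ≤ t) (n : ℕ) : 0 ≤ Fexp^[n] t := by
  induction n with
  | zero => exact h
  | succ n ih => rw [Function.iterate_succ_apply']; exact Fexp_nonneg ih

lemma Fexp_iter_strictMono (n : ℕ) : StrictMono (Fexp^[n]) :=
  Fexp_strictMono.iterate n

lemma le_Fexp_iter {t : ℝ} (n : ℕ) : t ≤ Fexp^[n] t := by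
  induction n with
  | zero => exact le_rfl
  | succ n ih => rw [Function.iterate_succ_apply']; exact le_trans ih (le_Fexp _)

/-- orbit step bound -/
lemma orb_succ_le (s : Addr) (t : ℝ) (n : ℕ) :
    orb s t (n+1) ≤ Fexp (orb s t n) := by
  simp only [orb]; have := w_nonneg s (n+1); linarith

lemma orb_le_iter (s : Addr) (t : ℝ) (j k : ℕ) :
    orb s t (j + k) ≤ Fexp^[k] (orb s t j) := by
  induction k with
  | zero => exact le_rfl
  | succ k ih =>
    rw [Function.iterate_succ_apply', ← Nat.add_assoc]
    exact le_trans (orb_succ_le s t (j+k)) (Fexp_strictMono.monotone ih)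

lemma orb_mono (s : Addr) (n : ℕ) : StrictMono (fun t => orb s t n) := by
  induction n with
  | zero => exact strictMono_id
  | succ n ih =>
    intro a b h
    simp only [orb]
    have := Fexp_strictMono (ih h)
    linarith

lemma orb_continuous (s : Addr) (n : ℕ) : Continuous (fun t => orb s t n) := by
  induction n with
  | zero => exact continuous_id
  | succ n ih =>
    simp only [orb, Fexp]
    exact ((Real.continuous_exp.comp ih).sub continuous_const).sub continuous_const

lemma orb_shift (s : Addr) (t : ℝ) (m k : ℕ) :
    orb s t (m + k) = orb (shiftA^[m] s) (orb s t m) k := by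
  induction k with
  | zero => rfl
  | succ k ih =>
    rw [← Nat.add_assoc]
    simp only [orb, ih]
    congr 1
    simp only [w, ofLex_shiftA_iter]
    congr 3
    ring

/-- The admissible set. -/
def Sset (s : Addr) : Set ℝ := {t | ∀ n : ℕ, 0 ≤ orb s t n}

lemma nonneg_of_mem {s : Addr} {t : ℝ} (h : t ∈ Sset s) : 0 ≤ t := h 0

lemma mem_Sset_iff (s : Addr) (t : ℝ) :
    t ∈ Sset s ↔ (0 ≤ t ∧ (s, t) ∈ Xbar) := by
  constructor
  · intro h
    refine ⟨h 0, fun n => ?_⟩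
    rw [Fmod_iterate]; exact h n
  · intro ⟨_, h⟩ n
    have := h n
    rwa [Fmod_iterate] at this

lemma Sset_closed (s : Addr) : IsClosed (Sset s) := by
  have : Sset s = ⋂ n : ℕ, (fun t => orb s t n) ⁻¹' Set.Ici 0 := by
    ext t; simp [Sset, Set.mem_iInter]
  rw [this]
  exact isClosed_iInter fun n => (isClosed_Ici).preimage (orb_continuous s n)

lemma Sset_upward {s : Addr} {t t' : ℝ} (h : t ∈ Sset s) (htt : t ≤ t') : t' ∈ Sset s :=
  fun n => le_trans (h n) ((orb_mono s n).monotone htt)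

lemma Sset_bddBelow (s : Addr) : BddBelow (Sset s) :=
  ⟨0, fun t ht => nonneg_of_mem ht⟩

/-- minimal potential as a real -/
def tau (s : Addr) : ℝ := sInf (Sset s)

lemma tau_mem {s : Addr} (h : (Sset s).Nonempty) : tau s ∈ Sset s :=
  (Sset_closed s).csInf_mem h (Sset_bddBelow s)

lemma tau_nonneg {s : Addr} (h : (Sset s).Nonempty) : 0 ≤ tau s :=
  nonneg_of_mem (tau_mem h)

lemma tau_le {s : Addr} {t : ℝ} (h : t ∈ Sset s) : tau s ≤ t :=
  csInf_le (Sset_bddBelow s) h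

lemma tS_eq (s : Addr) : tS s = sInf (ENNReal.ofReal '' Sset s) := by
  unfold tS
  congr 1
  ext t
  simp only [Set.mem_image]
  exact ⟨fun ⟨a, ha, h⟩ => ⟨a, (mem_Sset_iff s a).2 ha, h⟩,
    fun ⟨a, ha, h⟩ => ⟨a, (mem_Sset_iff s a).1 ha, h⟩⟩

lemma Sset_nonempty_of_ne_top {s : Addr} (hs : tS s ≠ ⊤) : (Sset s).Nonempty := by
  by_contra h
  rw [Set.not_nonempty_iff_eq_empty] at h
  rw [tS_eq, h] at hs
  simp at hs

lemma tS_eq_ofReal {s : Addr} (h : (Sset s).Nonempty) :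
    tS s = ENNReal.ofReal (tau s) := by
  rw [tS_eq]
  apply le_antisymm
  · exact csInf_le (OrderBot.bddBelow _) ⟨tau s, tau_mem h, rfl⟩
  · apply le_csInf (h.image _)
    rintro b ⟨t, ht, rfl⟩
    exact ENNReal.ofReal_le_ofReal (tau_le ht)

lemma toReal_tS {s : Addr} (h : (Sset s).Nonempty) : (tS s).toReal = tau s := by
  rw [tS_eq_ofReal h, ENNReal.toReal_ofReal (tau_nonneg h)]

/-- Key: the orbit of the minimal potential realizes the minimal potentials of shifts. -/
lemma tau_shift_one {s : Addr} (h : (Sset s).Nonempty) :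
    (Sset (shiftA s)).Nonempty ∧ tau (shiftA s) = orb s (tau s) 1 := by
  have hτ := tau_mem h
  have hmem : orb s (tau s) 1 ∈ Sset (shiftA s) := by
    intro k
    have := hτ (1 + k)
    rwa [orb_shift s (tau s) 1 k] at this
  refine ⟨⟨_, hmem⟩, ?_⟩
  set v := tau (shiftA s) with hv
  have hvle : v ≤ orb s (tau s) 1 := tau_le hmem
  rcases lt_or_eq_of_le hvle with hlt | heq
  · exfalso
    -- explicit preimage
    set c := w s 1 with hc
    have hv0 : 0 ≤ v := tau_nonneg ⟨_, hmem⟩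
    have hc0 : 0 ≤ c := w_nonneg s 1
    have hpos : (0:ℝ) < v + 1 + c := by linarith
    set t := Real.log (v + 1 + c) with ht
    have ht0 : 0 ≤ t := Real.log_nonneg (by linarith)
    have horb1 : orb s t 1 = v := by
      simp only [orb, Fexp, ht, Real.exp_log hpos, ← hc]
      ring
    have htlt : t < tau s := by
      have h1 : orb s (tau s) 1 = Fexp (tau s) - c := rfl
      have : v + 1 + c < Real.exp (tau s) := by
        rw [h1] at hlt
        simp only [Fexp] at hlt
        linarith
      calc t = Real.log (v + 1 + c) := ht
        _ < Real.log (Real.exp (tau s)) := Real.log_lt_log hpos this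
        _ = tau s := Real.log_exp _
    have htS : t ∈ Sset s := by
      intro n
      cases n with
      | zero => exact ht0
      | succ n =>
        have : orb s t (1 + n) = orb (shiftA s) (orb s t 1) n := orb_shift s t 1 n
        rw [Nat.add_comm 1 n] at this
        rw [this, horb1]
        exact (tau_mem ⟨_, hmem⟩) n
    exact absurd (tau_le htS) (not_le.2 htlt)
  · exact heq

lemma tau_shift {s : Addr} (h : (Sset s).Nonempty) (m : ℕ) :
    (Sset (shiftA^[m] s)).Nonempty ∧ tau (shiftA^[m] s) = orb s (tau s) m := by
  induction m with
  | zero => exact ⟨h, rfl⟩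
  | succ m ih =>
    obtain ⟨hne, heq⟩ := ih
    obtain ⟨hne', heq'⟩ := tau_shift_one hne
    rw [Function.iterate_succ_apply']
    refine ⟨hne', ?_⟩
    rw [heq', heq]
    have := orb_shift s (tau s) m 1
    rw [← this]

/-- exp one is at least two -/
lemma two_le_exp_one : (2:ℝ) ≤ Real.exp 1 := by
  have := Real.exp_one_gt_d9; norm_num at this ⊢; linarith

/-- Domination lemma: if the tail entries are bounded by iterates of `F` at `x`,
then `x + 1` is admissible. -/
lemma domination {s' : Addr} {x : ℝ} (hx : 0 ≤ x)
    (hb : ∀ k : ℕ, 1 ≤ k → w s' k ≤ Fexp^[k-1] x) :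
    ∀ m : ℕ, Fexp^[m] x + 1 ≤ orb s' (x+1) m := by
  intro m
  induction m with
  | zero => exact le_rfl
  | succ m ih =>
    have hW : 0 ≤ Fexp^[m] x := Fexp_iter_nonneg hx m
    set W := Fexp^[m] x with hWdef
    have hwb : w s' (m+1) ≤ W := by
      have := hb (m+1) (Nat.le_add_left 1 m)
      simpa using this
    have h1 : Fexp (W + 1) - W ≥ Fexp W + 1 := by
      simp only [Fexp, Real.exp_add]
      have h2 := Real.add_one_le_exp W
      have h3 := two_le_exp_one
      have h4 := Real.exp_pos W
      nlinarith
    calc Fexp^[m+1] x + 1 = Fexp W + 1 := by rw [Function.iterate_succ_apply']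
      _ ≤ Fexp (W + 1) - W := h1
      _ ≤ Fexp (orb s' (x+1) m) - w s' (m+1) := by
          have := Fexp_strictMono.monotone ih
          linarith
      _ = orb s' (x+1) (m+1) := rfl

/-- Gap lemma: iterates of `F` from distinct nonnegative points diverge. -/
lemma gap {a b : ℝ} (ha : 0 ≤ a) (hab : a < b) :
    ∃ N : ℕ, ∀ n ≥ N, 1 < Fexp^[n] b - Fexp^[n] a := by
  set g0 := b - a with hg0
  have hg0pos : 0 < g0 := by simp [hg0]; linarith
  have key : ∀ n : ℕ, g0 + n * (g0^2/4) ≤ Fexp^[n] b - Fexp^[n] a := by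
    intro n
    induction n with
    | zero => simp [hg0]
    | succ n ih =>
      set A := Fexp^[n] a with hA
      set B := Fexp^[n] b with hB
      have hA0 : 0 ≤ A := Fexp_iter_nonneg ha n
      set d := B - A with hd
      have hdg : g0 + n * (g0^2/4) ≤ d := ih
      have hd0 : g0 ≤ d := by nlinarith [sq_nonneg g0]
      -- e^d - 1 ≥ d + d^2/4
      have hquad : d + d^2/4 ≤ Real.exp d - 1 := by
        have h1 := Real.add_one_le_exp (d/2)
        have h2 : Real.exp d = Real.exp (d/2) * Real.exp (d/2) := by
          rw [← Real.exp_add]; ring_nf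
        nlinarith [Real.exp_pos (d/2)]
      have hstep : Fexp B - Fexp A = Real.exp A * (Real.exp d - 1) := by
        simp only [Fexp, hd]
        rw [show B = A + (B - A) by ring, Real.exp_add]
        ring_nf
      have hexpA : 1 ≤ Real.exp A := Real.one_le_exp hA0
      have : d + d^2/4 ≤ Fexp B - Fexp A := by
        rw [hstep]
        have h5 : 0 ≤ Real.exp d - 1 := by nlinarith [sq_nonneg d]
        nlinarith
      rw [Function.iterate_succ_apply', Function.iterate_succ_apply', ← hA, ← hB]
      push_cast
      nlinarith [sq_nonneg (d - g0)]
  obtain ⟨N, hN⟩ := exists_nat_ge (1 / (g0^2/4))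
  refine ⟨N + 1, fun n hn => ?_⟩
  have h1 : (1:ℝ) ≤ n * (g0^2/4) := by
    have hq : 0 < g0^2/4 := by positivity
    rw [div_le_iff₀ hq] at hN
    have : (N:ℝ) ≤ n := by exact_mod_cast Nat.le_of_succ_le hn
    nlinarith
  have := key n
  linarith

end SlowAux

open SlowAux


/-- **Properties of exponentially bounded addresses**: let `s` satisfy `t_s < ∞`. Then
(i) `s` is slow (`(s,t_s) ∉ X`) iff there are `x ≥ 0` and infinitely many `n ≥ 0` with
`2π |s_{n+k}| ≤ F^{k-1}(x)` for all `k ≥ 1`; (ii) `s` has positive minimal potential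
(`∃ x > 0` with `2π |s_n| ≥ F^{n-1}(x)` for infinitely many `n ≥ 1`) iff there is `x > 0`
with `t_{σ^j(s)} > F^j(x)` for all `j ≥ 0`.
(With 0-based indexing, the paper's `s_m` is `ofLex s (m-1)`.) -/
theorem slow_and_minimal_potential (s : Addr) (hs : tS s ≠ ⊤) :
    ((s, (tS s).toReal) ∉ Xset ↔
      ∃ x : ℝ, 0 ≤ x ∧ {n : ℕ | ∀ k : ℕ, 1 ≤ k →
        2 * Real.pi * |((ofLex s (n + k - 1) : ℤ) : ℝ)| ≤ Fexp^[k - 1] x}.Infinite) ∧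
    ((∃ x : ℝ, 0 < x ∧ {n : ℕ | 1 ≤ n ∧
        Fexp^[n - 1] x ≤ 2 * Real.pi * |((ofLex s (n - 1) : ℤ) : ℝ)|}.Infinite) ↔
      ∃ x : ℝ, 0 < x ∧ ∀ j : ℕ,
        ENNReal.ofReal (Fexp^[j] x) < tS (shiftA^[j] s)) := by
  have hne : (Sset s).Nonempty := Sset_nonempty_of_ne_top hs
  set τ := tau s with hτdef
  have hτmem : τ ∈ Sset s := tau_mem hne
  have hτ0 : 0 ≤ τ := hτmem 0
  have htoReal : (tS s).toReal = τ := toReal_tS hne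
  have hwdef : ∀ i : ℕ, 2 * Real.pi * |((ofLex s i : ℤ) : ℝ)| = w s i := fun i => rfl
  constructor
  · -- Part (i)
    rw [htoReal]
    have hXbar : (s, τ) ∈ Xbar := ((mem_Sset_iff s τ).1 hτmem).2
    have hfun : (fun n : ℕ => (Fmod^[n] (s, τ)).2) = fun n => orb s τ n :=
      funext fun n => by rw [Fmod_iterate]
    have hiff : (s, τ) ∉ Xset ↔ ¬ Tendsto (fun n => orb s τ n) atTop atTop := by
      simp only [Xset, Set.mem_setOf_eq, hXbar, true_and, hfun]
    rw [hiff]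
    constructor
    · intro hnt
      obtain ⟨M, hM⟩ : ∃ M : ℝ, ∀ a : ℕ, ∃ b : ℕ, a ≤ b ∧ orb s τ b < M := by
        rw [tendsto_atTop] at hnt; push_neg at hnt
        simpa [Filter.not_eventually, not_le, Filter.frequently_atTop] using hnt
      set M' := max M 0 with hM'
      refine ⟨Fexp M', Fexp_nonneg (le_max_right M 0), ?_⟩
      have hI : {n | orb s τ n ≤ M'}.Infinite := by
        rw [← Nat.frequently_atTop_iff_infinite, Filter.frequently_atTop]
        intro a
        obtain ⟨b, hb, h⟩ := hM a
        exact ⟨b, hb, le_trans h.le (le_max_left M 0)⟩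
      have hinj : Set.InjOn (fun n => n + 1) {n | orb s τ n ≤ M'} :=
        fun a _ b _ h => by simpa using h
      refine Set.Infinite.mono ?_ (hI.image hinj)
      rintro _ ⟨n, hn, rfl⟩ k hk
      simp only [Set.mem_setOf_eq] at hn ⊢
      obtain ⟨j, rfl⟩ : ∃ j, k = j + 1 := ⟨k - 1, by omega⟩
      have hidx : n + 1 + (j + 1) - 1 = (n + j) + 1 := by omega
      have hidx2 : j + 1 - 1 = j := by omega
      rw [hidx, hidx2, hwdef]
      have h1 : w s ((n + j) + 1) = Fexp (orb s τ (n + j)) - orb s τ ((n + j) + 1) := by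
        simp only [orb]; ring
      have h2 : w s ((n + j) + 1) ≤ Fexp (orb s τ (n + j)) := by
        have := hτmem ((n + j) + 1); rw [h1]; linarith
      have h3 : orb s τ (n + j) ≤ Fexp^[j] M' := by
        refine le_trans (orb_le_iter s τ n j) ((Fexp_iter_strictMono j).monotone hn)
      calc w s ((n + j) + 1) ≤ Fexp (orb s τ (n + j)) := h2
        _ ≤ Fexp (Fexp^[j] M') := Fexp_strictMono.monotone h3
        _ = Fexp^[j] (Fexp M') := by
            rw [← Function.iterate_succ_apply' Fexp j M', Function.iterate_succ_apply]
    · rintro ⟨x, hx0, hA⟩ hT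
      have hfreq : ∃ᶠ m in atTop, orb s τ m ≤ x + 1 := by
        rw [Filter.frequently_atTop]
        intro N
        obtain ⟨n, hnA, hn⟩ := hA.exists_gt N
        simp only [Set.mem_setOf_eq] at hnA
        refine ⟨n - 1, by omega, ?_⟩
        obtain ⟨hne', heq'⟩ := tau_shift hne (n - 1)
        rw [← heq']
        apply tau_le
        have hdom := domination (s' := shiftA^[n-1] s) hx0 ?_
        · intro m
          have := Fexp_iter_nonneg hx0 m
          have := hdom m
          linarith
        · intro k hk
          have hw : w (shiftA^[n-1] s) k = w s (n + k - 1) := by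
            simp only [w, ofLex_shiftA_iter]
            have : k + (n - 1) = n + k - 1 := by omega
            rw [this]
          rw [hw, ← hwdef]
          exact hnA k hk
      have hev : ∀ᶠ m in atTop, x + 2 ≤ orb s τ m := hT.eventually (eventually_ge_atTop (x + 2))
      obtain ⟨m, h1, h2⟩ := (hfreq.and_eventually hev).exists
      linarith
  · -- Part (ii)
    have hrw : ∀ x : ℝ, 0 ≤ x →
        ((∀ j : ℕ, ENNReal.ofReal (Fexp^[j] x) < tS (shiftA^[j] s)) ↔
          ∀ j : ℕ, Fexp^[j] x < orb s τ j) := by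
      intro x hx
      apply forall_congr'
      intro j
      obtain ⟨hnej, heqj⟩ := tau_shift hne j
      rw [tS_eq_ofReal hnej, heqj,
        ENNReal.ofReal_lt_ofReal_iff_of_nonneg (Fexp_iter_nonneg hx j)]
    constructor
    · rintro ⟨x, hx, hB⟩
      refine ⟨x / 2, by linarith, ?_⟩
      rw [hrw (x / 2) (by linarith)]
      intro j
      have hle : Fexp^[j] x ≤ orb s τ j := by
        obtain ⟨n, hnB, hn⟩ := hB.exists_gt (j + 1)
        simp only [Set.mem_setOf_eq, hwdef] at hnB
        obtain ⟨hn1, hnb⟩ := hnB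
        set m := n - 2 with hm
        have hmj : j ≤ m := by omega
        have h1 : w s (m + 1) = Fexp (orb s τ m) - orb s τ (m + 1) := by
          simp only [orb]; ring
        have h2 : Fexp (Fexp^[m] x) ≤ Fexp (orb s τ m) := by
          have e1 : n - 1 = m + 1 := by omega
          rw [e1, Function.iterate_succ_apply'] at hnb
          have := hτmem (m + 1)
          rw [h1] at hnb
          linarith
        have h3 : Fexp^[m] x ≤ orb s τ m := Fexp_strictMono.le_iff_le.1 h2
        have h4 : orb s τ (j + (m - j)) ≤ Fexp^[m-j] (orb s τ j) := orb_le_iter s τ j (m - j)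
        have e2 : j + (m - j) = m := by omega
        rw [e2] at h4
        have h5 : Fexp^[m-j] (Fexp^[j] x) ≤ Fexp^[m-j] (orb s τ j) := by
          have e3 : Fexp^[m-j] (Fexp^[j] x) = Fexp^[m] x := by
            rw [← Function.iterate_add_apply]; congr 1; omega
          rw [e3]; exact le_trans h3 h4
        exact (Fexp_iter_strictMono (m - j)).le_iff_le.1 h5
      exact lt_of_lt_of_le ((Fexp_iter_strictMono j) (by linarith : x / 2 < x)) hle
    · rintro ⟨x, hx, hall⟩
      rw [hrw x hx.le] at hall
      by_contra hLHS
      push_neg at hLHS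
      set y := Real.log (1 + x) / 2 with hy
      have hlog : 0 < Real.log (1 + x) := Real.log_pos (by linarith)
      have hy0 : 0 < y := by rw [hy]; linarith
      have hyx : Fexp y < x := by
        have h1 : y < Real.log (1 + x) := by rw [hy]; linarith
        have h2 := Real.exp_lt_exp.2 h1
        rw [Real.exp_log (by linarith : (0:ℝ) < 1 + x)] at h2
        simp only [Fexp]; linarith
      have hfin : {n : ℕ | 1 ≤ n ∧ Fexp^[n - 1] y ≤ w s (n - 1)}.Finite := by
        rw [← Set.not_infinite]
        intro hcon
        exact (Set.not_infinite.2 (hLHS y hy0)) (by simpa only [← hwdef] using hcon)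
      obtain ⟨N₀, hN₀⟩ := hfin.bddAbove
      obtain ⟨N₁, hN₁⟩ := gap (Fexp_nonneg hy0.le) hyx
      set N := max (N₀ + 1) N₁ with hNdef
      have hNN₀ : N₀ + 1 ≤ N := le_max_left _ _
      have hdomhyp : ∀ k : ℕ, 1 ≤ k →
          w (shiftA^[N] s) k ≤ Fexp^[k-1] (Fexp^[N+1] y) := by
        intro k hk
        have hnot : (N + k + 1) ∉ {n : ℕ | 1 ≤ n ∧ Fexp^[n - 1] y ≤ w s (n - 1)} := by
          intro hmem
          have := hN₀ hmem
          omega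
        simp only [Set.mem_setOf_eq, not_and, not_le] at hnot
        have hlt : w s (N + k + 1 - 1) < Fexp^[N + k + 1 - 1] y := hnot (by omega)
        have e1 : N + k + 1 - 1 = k + N := by omega
        rw [e1] at hlt
        have hw : w (shiftA^[N] s) k = w s (k + N) := by
          simp only [w, ofLex_shiftA_iter]
        have e2 : Fexp^[k-1] (Fexp^[N+1] y) = Fexp^[k + N] y := by
          rw [← Function.iterate_add_apply]; congr 1; omega
        rw [hw, e2]
        exact hlt.le
      have hdom := domination (Fexp_iter_nonneg hy0.le (N + 1)) hdomhyp
      have hmem : (Fexp^[N+1] y + 1) ∈ Sset (shiftA^[N] s) := by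
        intro m
        have := Fexp_iter_nonneg (Fexp_iter_nonneg hy0.le (N + 1)) m
        have := hdom m
        linarith
      obtain ⟨hneN, heqN⟩ := tau_shift hne N
      have h6 : orb s τ N ≤ Fexp^[N+1] y + 1 := by rw [← heqN]; exact tau_le hmem
      have h7 : 1 < Fexp^[N] x - Fexp^[N] (Fexp y) := hN₁ N (le_max_right _ _)
      have h8 : Fexp^[N+1] y = Fexp^[N] (Fexp y) := Function.iterate_succ_apply Fexp N y
      have h9 := hall N
      rw [h8] at h6
      linarith
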